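/- Let n ≥ 2 be an integer and a ∈ ℝ. Define H(x,y) = (x² + y²)·(1 − a·x^(n−1))^(−2/(n−1)) on the open set U = {(x,y) ∈ ℝ² : 1 − a·x^(n−1) > 0}. Then for every (x,y) ∈ U, (−y + a·x^(n−1)·y)·∂H/∂x(x,y) + (x + a·x^(n−2)·y²)·∂H/∂y(x,y) = 0, i.e. H is a first integral of the system ẋ = −y + a·x^(n−1)·y, ẏ = x + a·x^(n−2)·y². -/

import Mathlib

/-- `H(x,y) = (x² + y²)·(1 − a x^(n−1))^(−2/(n−1))` is a first integral of the
system `ẋ = −y + a x^(n−1) y, ẏ = x + a x^(n−2) y²` on the set where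
`1 − a x^(n−1) > 0`. -/
theorem stmt_1 (n : ℕ) (hn : 2 ≤ n) (a : ℝ) (x y : ℝ)
    (hxy : 1 - a * x ^ (n - 1) > 0) :
    (-y + a * x ^ (n - 1) * y) *
        deriv (fun t : ℝ => (t ^ 2 + y ^ 2) * (1 - a * t ^ (n - 1)) ^ (-2 / ((n : ℝ) - 1))) x
      + (x + a * x ^ (n - 2) * y ^ 2) *
        deriv (fun t : ℝ => (x ^ 2 + t ^ 2) * (1 - a * x ^ (n - 1)) ^ (-2 / ((n : ℝ) - 1))) y
      = 0 := by
  obtain ⟨m, rfl⟩ : ∃ m, n = m + 2 := ⟨n - 2, by omega⟩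
  simp only [show m + 2 - 1 = m + 1 from rfl, show m + 2 - 2 = m from rfl] at *
  set p : ℝ := -2 / ((↑(m + 2) : ℝ) - 1) with hp
  have hm1 : ((↑(m + 2) : ℝ) - 1) = (m : ℝ) + 1 := by push_cast; ring
  have hm1ne : ((m : ℝ) + 1) ≠ 0 := by positivity
  set g : ℝ := 1 - a * x ^ (m + 1) with hg
  have hgne : g ≠ 0 := ne_of_gt hxy
  -- derivative of inner function
  have hinner : HasDerivAt (fun t : ℝ => 1 - a * t ^ (m + 1))
      (-(a * ((m : ℝ) + 1) * x ^ m)) x := by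
    have := ((hasDerivAt_pow (m + 1) x).const_mul a).const_sub 1
    refine this.congr_deriv ?_
    push_cast; ring
  have hrpow : HasDerivAt (fun t : ℝ => (1 - a * t ^ (m + 1)) ^ p)
      (-(a * ((m : ℝ) + 1) * x ^ m) * p * g ^ (p - 1)) x :=
    hinner.rpow_const (Or.inl hgne)
  have h1 : HasDerivAt (fun t : ℝ => (t ^ 2 + y ^ 2) * (1 - a * t ^ (m + 1)) ^ p)
      ((2 * x) * g ^ p + (x ^ 2 + y ^ 2) * (-(a * ((m : ℝ) + 1) * x ^ m) * p * g ^ (p - 1))) x := by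
    have := (((hasDerivAt_pow 2 x).add_const (y ^ 2)).mul hrpow)
    refine this.congr_deriv ?_
    push_cast; ring
  have h2 : HasDerivAt (fun t : ℝ => (x ^ 2 + t ^ 2) * g ^ p) (2 * y * g ^ p) y := by
    have := ((hasDerivAt_pow 2 y).const_add (x ^ 2)).mul_const (g ^ p)
    refine this.congr_deriv ?_
    push_cast; ring
  rw [h1.deriv, h2.deriv]
  have hgp : g ^ p = g ^ (p - 1) * g := by
    rw [show p = (p - 1) + 1 by ring, Real.rpow_add hxy, Real.rpow_one]
    ring
  have hpval : p = -2 / ((m : ℝ) + 1) := by rw [hp, hm1]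
  rw [hgp, hpval, hg]
  field_simp
  ring_nf
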